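/- Let μ ∈ (0,1), r ∈ ℝ with r ≠ 0, and φ ∈ ℝ. Let Q be the 5×5 real symmetric matrix whose nonzero entries (in a fixed ordering of indices 1,…,5) are Q_{11} = 4μ(cosh 2r − cos φ sinh 2r), Q_{22} = 4μ(cosh 2r + cos φ sinh 2r), Q_{12} = Q_{21} = 4μ sinh(2r) sin φ, Q_{33} = 4/(1+μ²), Q_{44} = sinh²(2r)/(1+μ²), Q_{55} = 4μ²/(1−μ²), and let U be the 5×5 real antisymmetric matrix whose nonzero entries are U_{12} = −U_{21} = 4μ² and U_{43} = −U_{34} = 4μ sinh(2r)/(1+μ²)². Then the eigenvalues of the matrix iQ⁻¹U are exactly {2μ/(1+μ²), μ, 0, −μ, −2μ/(1+μ²)}; in particular the largest eigenvalue is 2μ/(1+μ²). -/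

import Mathlib

open Matrix Polynomial

/-- The SLD quantum Fisher information matrix of the full single-mode Gaussian model with
purity `μ`, squeezing `r e^{iφ}`, in the parameter ordering `(Re α, Im α, r, φ, N)`. -/
noncomputable def gaussQmat (μ r φ : ℝ) : Matrix (Fin 5) (Fin 5) ℝ :=
  !![4 * μ * (Real.cosh (2 * r) - Real.cos φ * Real.sinh (2 * r)),
       4 * μ * Real.sinh (2 * r) * Real.sin φ, 0, 0, 0;
     4 * μ * Real.sinh (2 * r) * Real.sin φ,
       4 * μ * (Real.cosh (2 * r) + Real.cos φ * Real.sinh (2 * r)), 0, 0, 0;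
     0, 0, 4 / (1 + μ ^ 2), 0, 0;
     0, 0, 0, Real.sinh (2 * r) ^ 2 / (1 + μ ^ 2), 0;
     0, 0, 0, 0, 4 * μ ^ 2 / (1 - μ ^ 2)]

noncomputable def gaussUmat (μ r : ℝ) : Matrix (Fin 5) (Fin 5) ℝ :=
  !![0, 4 * μ ^ 2, 0, 0, 0;
     -(4 * μ ^ 2), 0, 0, 0, 0;
     0, 0, 0, -(4 * μ * Real.sinh (2 * r) / (1 + μ ^ 2) ^ 2), 0;
     0, 0, 4 * μ * Real.sinh (2 * r) / (1 + μ ^ 2) ^ 2, 0, 0;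
     0, 0, 0, 0, 0]

noncomputable def gaussQinv (μ r φ : ℝ) : Matrix (Fin 5) (Fin 5) ℝ :=
  !![(Real.cosh (2 * r) + Real.cos φ * Real.sinh (2 * r)) / (4 * μ),
       -(Real.sinh (2 * r) * Real.sin φ) / (4 * μ), 0, 0, 0;
     -(Real.sinh (2 * r) * Real.sin φ) / (4 * μ),
       (Real.cosh (2 * r) - Real.cos φ * Real.sinh (2 * r)) / (4 * μ), 0, 0, 0;
     0, 0, (1 + μ ^ 2) / 4, 0, 0;
     0, 0, 0, (1 + μ ^ 2) / Real.sinh (2 * r) ^ 2, 0;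
     0, 0, 0, 0, (1 - μ ^ 2) / (4 * μ ^ 2)]

noncomputable def gaussMmat (μ r φ : ℝ) : Matrix (Fin 5) (Fin 5) ℝ :=
  !![μ * Real.sinh (2 * r) * Real.sin φ,
       μ * (Real.cosh (2 * r) + Real.cos φ * Real.sinh (2 * r)), 0, 0, 0;
     -(μ * (Real.cosh (2 * r) - Real.cos φ * Real.sinh (2 * r))),
       -(μ * Real.sinh (2 * r) * Real.sin φ), 0, 0, 0;
     0, 0, 0, -(μ * Real.sinh (2 * r) / (1 + μ ^ 2)), 0;
     0, 0, 4 * μ / (Real.sinh (2 * r) * (1 + μ ^ 2)), 0, 0;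
     0, 0, 0, 0, 0]

lemma gauss_right_inv (μ r φ : ℝ) (hμ0 : 0 < μ) (hμ1 : μ < 1) (hr : r ≠ 0) :
    gaussQmat μ r φ * gaussQinv μ r φ = 1 := by
  have hs : Real.sinh (2 * r) ≠ 0 := Real.sinh_ne_zero.mpr (by simpa using hr)
  have hμ : μ ≠ 0 := ne_of_gt hμ0
  have h1 : (1:ℝ) - μ ^ 2 ≠ 0 := by nlinarith
  have h2 : (1:ℝ) + μ ^ 2 ≠ 0 := by positivity
  have hch : Real.cosh (2*r) ^ 2 - Real.sinh (2*r) ^ 2 = 1 := Real.cosh_sq_sub_sinh_sq _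
  have hsc : Real.sin φ ^ 2 + Real.cos φ ^ 2 = 1 := Real.sin_sq_add_cos_sq _
  ext i j
  fin_cases i <;> fin_cases j <;>
    simp [gaussQmat, gaussQinv, Matrix.mul_apply, Fin.sum_univ_five, Matrix.one_apply,
      Matrix.vecHead, Matrix.vecTail]
  all_goals field_simp
  all_goals try ring
  · linear_combination (Real.cosh_sq_sub_sinh_sq (r*2)) - (Real.sinh (r*2)^2)*hsc
  · linear_combination (Real.cosh_sq_sub_sinh_sq (r*2)) - (Real.sinh (r*2)^2)*hsc
  · exact h2

lemma gauss_M_eq (μ r φ : ℝ) (hμ0 : 0 < μ) (hμ1 : μ < 1) (hr : r ≠ 0) :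
    (gaussQmat μ r φ)⁻¹ * gaussUmat μ r = gaussMmat μ r φ := by
  have hs : Real.sinh (2 * r) ≠ 0 := Real.sinh_ne_zero.mpr (by simpa using hr)
  have hμ : μ ≠ 0 := ne_of_gt hμ0
  have h2 : (1:ℝ) + μ ^ 2 ≠ 0 := by positivity
  rw [Matrix.inv_eq_right_inv (gauss_right_inv μ r φ hμ0 hμ1 hr)]
  ext i j
  fin_cases i <;> fin_cases j <;>
    simp [gaussQinv, gaussUmat, gaussMmat, Matrix.mul_apply, Fin.sum_univ_five,
      Matrix.vecHead, Matrix.vecTail]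
  all_goals field_simp
  all_goals ring


set_option maxHeartbeats 2000000 in
lemma charm (μ r φ : ℝ) :
    charmatrix (Complex.I • ((gaussMmat μ r φ).map Complex.ofReal))
      = !![X - C (Complex.I * (μ * Real.sinh (2 * r) * Real.sin φ)),
             -C (Complex.I * (μ * (Real.cosh (2 * r) + Real.cos φ * Real.sinh (2 * r)))), 0, 0, 0;
           -C (Complex.I * (-(μ * (Real.cosh (2 * r) - Real.cos φ * Real.sinh (2 * r))))),
             X - C (Complex.I * (-(μ * Real.sinh (2 * r) * Real.sin φ))), 0, 0, 0;
           0, 0, X, -C (Complex.I * (-(μ * Real.sinh (2 * r) / (1 + μ ^ 2)))), 0;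
           0, 0, -C (Complex.I * (4 * μ / (Real.sinh (2 * r) * (1 + μ ^ 2)))), X, 0;
           0, 0, 0, 0, X] := by
  ext i j
  fin_cases i <;> fin_cases j <;>
    simp [charmatrix_apply, gaussMmat, Matrix.smul_apply, Matrix.map_apply,
      Matrix.vecHead, Matrix.vecTail, Matrix.one_apply, Matrix.diagonal_apply]

lemma det_five_block {R : Type*} [CommRing R] (a b c d e f x : R) :
    Matrix.det !![a,b,0,0,0; c,d,0,0,0; 0,0,x,e,0; 0,0,f,x,0; 0,0,0,0,x]
      = (a*d - b*c) * (x*x - e*f) * x := by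
  simp [Matrix.det_succ_row_zero, Fin.sum_univ_succ, Fin.succAbove]
  ring

lemma gauss_charpoly (μ r φ : ℝ) (hμ0 : 0 < μ) (hμ1 : μ < 1) (hr : r ≠ 0) :
    (Complex.I • ((gaussMmat μ r φ).map Complex.ofReal)).charpoly
        = (({((2 * μ / (1 + μ ^ 2) : ℝ) : ℂ), ((μ : ℝ) : ℂ), 0, -((μ : ℝ) : ℂ),
          -((2 * μ / (1 + μ ^ 2) : ℝ) : ℂ)} : Multiset ℂ).map fun a => X - C a).prod := by
  have hs : (Real.sinh (2 * r) : ℂ) ≠ 0 := by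
    exact_mod_cast Real.sinh_ne_zero.mpr (by simpa using hr)
  have h2 : ((1:ℂ) + (μ:ℂ) ^ 2) ≠ 0 := by
    intro h
    have : (1:ℝ) + μ ^ 2 = 0 := by exact_mod_cast h
    nlinarith
  have hchC : ((Real.cosh (2*r) : ℂ))^2 - ((Real.sinh (2*r) : ℂ))^2 = 1 := by
    exact_mod_cast Real.cosh_sq_sub_sinh_sq (2*r)
  have hscC : ((Real.sin φ : ℂ))^2 + ((Real.cos φ : ℂ))^2 = 1 := by
    exact_mod_cast Real.sin_sq_add_cos_sq φ
  rw [Matrix.charpoly, charm μ r φ, det_five_block]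
  simp only [Multiset.insert_eq_cons, Multiset.map_cons, Multiset.map_singleton,
    Multiset.prod_cons, Multiset.prod_singleton, map_neg, map_zero]
  have h0 : C (Complex.I * ((μ:ℂ) * (Real.sinh (2*r):ℂ) * (Real.sin φ:ℂ)))
      + C (Complex.I * (-((μ:ℂ) * (Real.sinh (2*r):ℂ) * (Real.sin φ:ℂ)))) = (0 : ℂ[X]) := by
    rw [← _root_.map_add, show Complex.I * ((μ:ℂ) * (Real.sinh (2*r):ℂ) * (Real.sin φ:ℂ))
      + Complex.I * (-((μ:ℂ) * (Real.sinh (2*r):ℂ) * (Real.sin φ:ℂ))) = 0 from by ring, map_zero]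
  have h1 : C (Complex.I * ((μ:ℂ) * (Real.sinh (2*r):ℂ) * (Real.sin φ:ℂ)))
        * C (Complex.I * (-((μ:ℂ) * (Real.sinh (2*r):ℂ) * (Real.sin φ:ℂ))))
      - C (Complex.I * ((μ:ℂ) * ((Real.cosh (2*r):ℂ) + (Real.cos φ:ℂ) * (Real.sinh (2*r):ℂ))))
        * C (Complex.I * (-((μ:ℂ) * ((Real.cosh (2*r):ℂ) - (Real.cos φ:ℂ) * (Real.sinh (2*r):ℂ)))))
      = -(C ((μ:ℝ):ℂ) * C ((μ:ℝ):ℂ)) := by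
    rw [← _root_.map_mul, ← _root_.map_mul, ← _root_.map_mul, ← _root_.map_sub, ← _root_.map_neg]
    congr 1
    linear_combination ((μ:ℂ)^2*((Real.cosh (2*r):ℂ)^2 - (Real.sinh (2*r):ℂ)^2*((Real.cos φ:ℂ)^2+(Real.sin φ:ℂ)^2))) * Complex.I_sq
      + (-(μ:ℂ)^2) * hchC + ((μ:ℂ)^2*(Real.sinh (2*r):ℂ)^2) * hscC
  have h2' : C (Complex.I * (-((μ:ℂ) * (Real.sinh (2*r):ℂ) / (1 + (μ:ℂ)^2))))
        * C (Complex.I * (4 * (μ:ℂ) / ((Real.sinh (2*r):ℂ) * (1 + (μ:ℂ)^2))))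
      = C ((2 * μ / (1 + μ ^ 2) : ℝ) : ℂ) * C ((2 * μ / (1 + μ ^ 2) : ℝ) : ℂ) := by
    rw [← _root_.map_mul, ← _root_.map_mul]
    congr 1
    simp only [Complex.ofReal_div, Complex.ofReal_mul, Complex.ofReal_ofNat,
      Complex.ofReal_one, Complex.ofReal_pow, Complex.ofReal_add]
    generalize hS : ((Real.sinh (2*r) : ℝ) : ℂ) = S at hs ⊢
    field_simp
    linear_combination (-4*(μ:ℂ)^2) * Complex.I_sq
  linear_combination
    (-(X*X*(X^2 - C (Complex.I * (-((μ:ℂ) * (Real.sinh (2*r):ℂ) / (1 + (μ:ℂ)^2))))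
        * C (Complex.I * (4 * (μ:ℂ) / ((Real.sinh (2*r):ℂ) * (1 + (μ:ℂ)^2))))))) * h0
    + (X*(X^2 - C (Complex.I * (-((μ:ℂ) * (Real.sinh (2*r):ℂ) / (1 + (μ:ℂ)^2))))
        * C (Complex.I * (4 * (μ:ℂ) / ((Real.sinh (2*r):ℂ) * (1 + (μ:ℂ)^2)))))) * h1
    + (-(X*(X^2 - C ((μ:ℝ):ℂ) * C ((μ:ℝ):ℂ)))) * h2'

/-- The eigenvalues of `iQ⁻¹U` for the full single-mode Gaussian model are exactly
`{2μ/(1+μ²), μ, 0, −μ, −2μ/(1+μ²)}`; in particular every eigenvalue has real part at most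
`2μ/(1+μ²)`, which is thus the largest eigenvalue. -/
theorem stmt18 (μ r φ : ℝ) (hμ0 : 0 < μ) (hμ1 : μ < 1) (hr : r ≠ 0) :
    ((Complex.I • (((gaussQmat μ r φ)⁻¹ * gaussUmat μ r).map
        Complex.ofReal)).charpoly).roots
      = {((2 * μ / (1 + μ ^ 2) : ℝ) : ℂ), ((μ : ℝ) : ℂ), 0, -((μ : ℝ) : ℂ),
          -((2 * μ / (1 + μ ^ 2) : ℝ) : ℂ)} ∧
    (∀ z ∈ ((Complex.I • (((gaussQmat μ r φ)⁻¹ * gaussUmat μ r).map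
        Complex.ofReal)).charpoly).roots, z.re ≤ 2 * μ / (1 + μ ^ 2)) := by
  have hs : Real.sinh (2 * r) ≠ 0 := Real.sinh_ne_zero.mpr (by simpa using hr)
  have hμ : μ ≠ 0 := ne_of_gt hμ0
  have h2 : (1:ℝ) + μ ^ 2 ≠ 0 := by positivity
  have hch : Real.cosh (2*r) ^ 2 - Real.sinh (2*r) ^ 2 = 1 := Real.cosh_sq_sub_sinh_sq _
  have hsc : Real.sin φ ^ 2 + Real.cos φ ^ 2 = 1 := Real.sin_sq_add_cos_sq _
  rw [gauss_M_eq μ r φ hμ0 hμ1 hr]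
  have hroots : ((Complex.I • ((gaussMmat μ r φ).map Complex.ofReal)).charpoly).roots
      = {((2 * μ / (1 + μ ^ 2) : ℝ) : ℂ), ((μ : ℝ) : ℂ), 0, -((μ : ℝ) : ℂ),
          -((2 * μ / (1 + μ ^ 2) : ℝ) : ℂ)} := by
    rw [gauss_charpoly μ r φ hμ0 hμ1 hr, Polynomial.roots_multiset_prod_X_sub_C]
  refine ⟨hroots, ?_⟩
  intro z hz
  rw [hroots] at hz
  have ha : (0:ℝ) < 1 + μ ^ 2 := by positivity
  simp only [Multiset.insert_eq_cons, Multiset.mem_cons, Multiset.mem_singleton] at hz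
  have hq : 0 ≤ 2 * μ / (1 + μ ^ 2) := by positivity
  have hb : μ ≤ 2 * μ / (1 + μ ^ 2) := by
    rw [le_div_iff₀ ha]; nlinarith
  rcases hz with h | h | h | h | h <;> subst h <;>
    simp only [Complex.ofReal_re, Complex.neg_re, Complex.zero_re] <;> linarith
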